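/- arXiv:1810.02898 — 6 statements merged into one kernel-verified Lean document; each statement's English description precedes it below -/
import Mathlib

section
/- Let ℓ ≥ 1 and let e = (e_1, …, e_ℓ) be a vector in ℝ^{n_e} partitioned into ℓ blocks, and let j* = min(argmax_j |e_j|). If |e_{j*}| < 1, then the modified TOD update satisfies |h(e)| ≤ |e| · √(1 − |e| / ℓ^{3/2}). -/
/-- **Modified TOD, small-error bound.**
`e` is a vector in `ℝ^{n_e}` partitioned into `ℓ` blocks, and `jstar` is the
minimal index of maximal block norm.  The modified TOD update is
`h j = (1 - sat ‖e j‖) • e j` for `j = jstar` and `h j = e j` otherwise,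
where `sat s = min s 1`.  If `‖e jstar‖ < 1` then
`|h(e)| ≤ |e| · √(1 - |e| / ℓ^{3/2})`. -/
theorem modified_TOD_small_error_bound
    (ℓ : ℕ) (hℓ : 1 ≤ ℓ) (n : Fin ℓ → ℕ)
    (e : (j : Fin ℓ) → EuclideanSpace ℝ (Fin (n j)))
    (jstar : Fin ℓ)
    (hmax : ∀ j, ‖e j‖ ≤ ‖e jstar‖)
    (hmin : ∀ j, ‖e j‖ = ‖e jstar‖ → jstar ≤ j)
    (hsmall : ‖e jstar‖ < 1)
    (h : (j : Fin ℓ) → EuclideanSpace ℝ (Fin (n j)))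
    (hdef : ∀ j, h j = if j = jstar then (1 - min ‖e j‖ 1) • e j else e j) :
    Real.sqrt (∑ j, ‖h j‖ ^ 2) ≤
      Real.sqrt (∑ j, ‖e j‖ ^ 2) *
        Real.sqrt (1 - Real.sqrt (∑ j, ‖e j‖ ^ 2) / (ℓ : ℝ) ^ ((3 : ℝ) / 2)) := by
  set m := ‖e jstar‖ with hm
  have hm0 : 0 ≤ m := norm_nonneg _
  set S := ∑ j, ‖e j‖ ^ 2 with hS
  have hS0 : 0 ≤ S := Finset.sum_nonneg fun j _ => sq_nonneg _
  set E := Real.sqrt S with hE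
  have hE0 : 0 ≤ E := Real.sqrt_nonneg _
  have hE2 : E ^ 2 = S := Real.sq_sqrt hS0
  have hL1 : (1 : ℝ) ≤ (ℓ : ℝ) := by exact_mod_cast hℓ
  have hL0 : (0 : ℝ) < (ℓ : ℝ) := by linarith
  have hsL : 1 ≤ Real.sqrt ℓ := by
    rw [show (1:ℝ) = Real.sqrt 1 by simp]
    exact Real.sqrt_le_sqrt hL1
  have hL32 : ((ℓ : ℝ)) ^ ((3 : ℝ) / 2) = (ℓ : ℝ) * Real.sqrt ℓ := by
    rw [show (3 : ℝ)/2 = 1 + 1/2 by norm_num, Real.rpow_add hL0, Real.rpow_one,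
      ← Real.sqrt_eq_rpow]
  have hL32pos : (0:ℝ) < (ℓ : ℝ) * Real.sqrt ℓ := by positivity
  -- S ≤ ℓ m²
  have hSle : S ≤ (ℓ : ℝ) * m ^ 2 := by
    calc S ≤ ∑ _j : Fin ℓ, m ^ 2 := by
            apply Finset.sum_le_sum
            intro j _
            have := hmax j
            nlinarith [norm_nonneg (e j)]
      _ = (ℓ : ℝ) * m ^ 2 := by
            simp [Finset.sum_const, Finset.card_univ, nsmul_eq_mul]
  have hEle : E ≤ Real.sqrt ℓ * m := by
    have : E ≤ Real.sqrt ((ℓ : ℝ) * m ^ 2) := Real.sqrt_le_sqrt hSle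
    rwa [Real.sqrt_mul (le_of_lt hL0), Real.sqrt_sq hm0] at this
  -- sum of h
  have hsum : ∑ j, ‖h j‖ ^ 2 = S - m ^ 2 + ((1 - m) * m) ^ 2 := by
    have h1 : ∀ j, ‖h j‖ ^ 2 = ‖e j‖ ^ 2 + (if j = jstar then ((1 - m) * m) ^ 2 - m ^ 2 else 0) := by
      intro j
      rw [hdef j]
      by_cases hj : j = jstar
      · subst hj
        rw [if_pos rfl, if_pos rfl, norm_smul, min_eq_left hsmall.le,
          Real.norm_eq_abs, abs_of_nonneg (by linarith : (0:ℝ) ≤ 1 - m)]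
        ring
      · simp [hj]
    rw [Finset.sum_congr rfl fun j _ => h1 j, Finset.sum_add_distrib,
      Finset.sum_ite_eq' Finset.univ jstar, if_pos (Finset.mem_univ _)]
    ring
  rw [hsum, ← Real.sqrt_mul hS0]
  apply Real.sqrt_le_sqrt
  have hdiv : S * E / ((ℓ : ℝ) ^ ((3 : ℝ) / 2)) ≤ m ^ 3 * (2 - m) := by
    rw [hL32, div_le_iff₀ hL32pos]
    nlinarith [mul_le_mul hSle hEle hE0 (by positivity : (0:ℝ) ≤ (ℓ:ℝ) * m ^ 2),
      mul_pos hL0 (by positivity : (0:ℝ) < Real.sqrt ℓ), sq_nonneg m,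
      mul_nonneg (mul_nonneg hm0 hm0) hm0,
      mul_nonneg (mul_nonneg (mul_nonneg hm0 hm0) hm0) (le_of_lt hL32pos)]
  have : S * (1 - E / (ℓ : ℝ) ^ ((3 : ℝ) / 2)) = S - S * E / ((ℓ : ℝ) ^ ((3 : ℝ) / 2)) := by
    ring
  rw [this]
  nlinarith [hdiv]
end

section
/- Let ℓ ≥ 1 and let e ∈ ℝ^{n_e} be partitioned into ℓ blocks. Then the modified TOD update satisfies |h(e)| ≤ σ_TOD(|e|) for every e, where σ_TOD(s) = s·√(1 − s/ℓ^{3/2}) for 0 ≤ s ≤ √ℓ and σ_TOD(s) = √((ℓ−1)/ℓ)·s for s > √ℓ. In other words, the Euclidean norm W(e) = |e| is a Lyapunov function for the discrete-time system induced by the modified TOD protocol, with decay function σ_TOD. -/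
set_option maxHeartbeats 1000000


/-- **Modified TOD is a Lyapunov-decreasing protocol with gain `σ_TOD`.**
For every vector `e` partitioned into `ℓ` blocks, with `jstar` the minimal index
of maximal block norm and `h` the modified TOD update
(`h j = (1 - min ‖e j‖ 1) • e j` for `j = jstar`, `h j = e j` otherwise),
we have `|h(e)| ≤ σ(|e|)`, where
`σ s = s·√(1 - s/ℓ^{3/2})` for `0 ≤ s ≤ √ℓ` and
`σ s = √((ℓ-1)/ℓ)·s` for `s > √ℓ`. -/
theorem modified_TOD_lyapunov_decrease
    (ℓ : ℕ) (hℓ : 1 ≤ ℓ) (σ : ℝ → ℝ)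
    (hσ1 : ∀ s : ℝ, 0 ≤ s → s ≤ Real.sqrt ℓ →
      σ s = s * Real.sqrt (1 - s / (ℓ : ℝ) ^ ((3 : ℝ) / 2)))
    (hσ2 : ∀ s : ℝ, Real.sqrt ℓ < s → σ s = Real.sqrt (((ℓ : ℝ) - 1) / (ℓ : ℝ)) * s) :
    ∀ (n : Fin ℓ → ℕ) (e : (j : Fin ℓ) → EuclideanSpace ℝ (Fin (n j))) (jstar : Fin ℓ)
      (_hmax : ∀ j, ‖e j‖ ≤ ‖e jstar‖)
      (_hmin : ∀ j, ‖e j‖ = ‖e jstar‖ → jstar ≤ j)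
      (h : (j : Fin ℓ) → EuclideanSpace ℝ (Fin (n j)))
      (_hdef : ∀ j, h j = if j = jstar then (1 - min ‖e j‖ 1) • e j else e j),
      Real.sqrt (∑ j, ‖h j‖ ^ 2) ≤ σ (Real.sqrt (∑ j, ‖e j‖ ^ 2)) := by
  intro n e jstar _hmax _hmin h _hdef
  set L : ℝ := (ℓ : ℝ) with hL
  have hL1 : (1 : ℝ) ≤ L := by rw [hL]; exact_mod_cast hℓ
  set m : ℝ := ‖e jstar‖ with hm
  set t : ℝ := min m 1 with ht
  have hm0 : 0 ≤ m := norm_nonneg _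
  have ht1 : t ≤ 1 := min_le_right _ _
  have ht0 : 0 ≤ t := le_min hm0 zero_le_one
  set S : ℝ := ∑ j, ‖e j‖ ^ 2 with hSdef
  have hS0 : 0 ≤ S := Finset.sum_nonneg fun j _ => sq_nonneg _
  set s : ℝ := Real.sqrt S with hs
  have hs0 : 0 ≤ s := Real.sqrt_nonneg _
  have hs2 : s ^ 2 = S := Real.sq_sqrt hS0
  -- sum of h
  have hhstar : ‖h jstar‖ = (1 - t) * m := by
    rw [_hdef jstar, if_pos rfl, norm_smul, Real.norm_eq_abs,
      abs_of_nonneg (by linarith : (0:ℝ) ≤ 1 - t)]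
  have hsum : ∑ j, ‖h j‖ ^ 2 = S - m ^ 2 + ((1 - t) * m) ^ 2 := by
    have h1 : ∑ j, (‖h j‖ ^ 2 - ‖e j‖ ^ 2) = ((1 - t) * m) ^ 2 - m ^ 2 := by
      rw [Finset.sum_eq_single jstar]
      · rw [hhstar]
      · intro j _ hj
        rw [_hdef j, if_neg hj]; ring
      · intro hj; exact absurd (Finset.mem_univ _) hj
    rw [Finset.sum_sub_distrib] at h1
    have := hSdef
    linarith
  -- bounds
  have hSL : S ≤ L * m ^ 2 := by
    calc S ≤ ∑ _j : Fin ℓ, m ^ 2 :=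
          Finset.sum_le_sum fun j _ => by
            have := _hmax j
            nlinarith [norm_nonneg (e j)]
      _ = L * m ^ 2 := by simp [Finset.sum_const, hL]
  have hm2S : m ^ 2 ≤ S :=
    Finset.single_le_sum (f := fun j => ‖e j‖ ^ 2) (fun j _ => sq_nonneg _) (Finset.mem_univ jstar)
  have hsm : s ≤ Real.sqrt L * m := by
    rw [hs]
    calc Real.sqrt S ≤ Real.sqrt (L * m ^ 2) := Real.sqrt_le_sqrt hSL
      _ = Real.sqrt L * m := by
          rw [Real.sqrt_mul (by linarith) , Real.sqrt_sq hm0]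
  have hsqL0 : 0 ≤ Real.sqrt L := Real.sqrt_nonneg _
  have hsqL2 : Real.sqrt L ^ 2 = L := Real.sq_sqrt (by linarith)
  -- the key inequality via squares
  have key : ∑ j, ‖h j‖ ^ 2 ≤ σ s ^ 2 ∧ 0 ≤ σ s := by
    rcases le_or_gt s (Real.sqrt L) with hcase | hcase
    · -- s ≤ √L
      have hσ := hσ1 s hs0 (by rwa [hL])
      have hP : L ^ ((3:ℝ)/2) = L * Real.sqrt L := by
        rw [show (3:ℝ)/2 = 1 + 1/2 by norm_num,
          Real.rpow_add (by linarith : (0:ℝ) < L), Real.rpow_one,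
          Real.sqrt_eq_rpow]
      have hP0 : 0 < L * Real.sqrt L := by nlinarith
      have harg : 0 ≤ 1 - s / (L * Real.sqrt L) := by
        rw [sub_nonneg, div_le_one hP0]
        nlinarith
      have hσ' : σ s = s * Real.sqrt (1 - s / (L * Real.sqrt L)) := by
        rw [hσ, hP]
      constructor
      · rw [hσ', mul_pow, Real.sq_sqrt harg, hsum]
        have hgoal : s ^ 3 ≤ (L * Real.sqrt L) * (m ^ 2 * t * (2 - t)) := by
          rcases le_or_gt 1 m with hm1 | hm1
          · have : t = 1 := min_eq_right hm1
            rw [this]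
            have h3 : s ^ 3 = s * s ^ 2 := by ring
            nlinarith [hs2, hSL, hcase, hs0]
          · have htm : t = m := min_eq_left (le_of_lt hm1)
            rw [htm]
            have hcube : s ^ 3 ≤ (Real.sqrt L * m) ^ 3 :=
              pow_le_pow_left₀ hs0 hsm 3
            have hc2 : (Real.sqrt L * m) ^ 3 = L * Real.sqrt L * m ^ 3 := by
              have h9 : (Real.sqrt L * m) ^ 3 = Real.sqrt L ^ 2 * Real.sqrt L * m ^ 3 := by
                ring
              rw [h9, hsqL2]
            nlinarith [hcube, hc2, mul_nonneg (mul_nonneg hP0.le (pow_nonneg hm0 3))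
              (by linarith : (0:ℝ) ≤ 1 - m)]
        have hexp : s ^ 2 * (1 - s / (L * Real.sqrt L)) = S - s ^ 3 / (L * Real.sqrt L) := by
          field_simp
          nlinarith [hs2]
        rw [hexp]
        have h4 : s ^ 3 / (L * Real.sqrt L) ≤ m ^ 2 * t * (2 - t) :=
          (div_le_iff₀ hP0).mpr (by nlinarith)
        nlinarith
      · rw [hσ']
        positivity
    · -- √L < s
      have hσ := hσ2 s (by rwa [hL] at hcase ⊢)
      have hm1 : 1 ≤ m := by nlinarith [hs2]
      have htt : t = 1 := min_eq_right hm1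
      constructor
      · rw [hσ, mul_pow, Real.sq_sqrt (div_nonneg (by linarith) (by linarith) : (0:ℝ) ≤ (L-1)/L), hsum, htt]
        have : (L - 1) / L * s ^ 2 = S - S / L := by
          field_simp; nlinarith [hs2]
        rw [this]
        have : S / L ≤ m ^ 2 := (div_le_iff₀ (by linarith)).mpr (by nlinarith)
        nlinarith
      · rw [hσ]
        exact mul_nonneg (Real.sqrt_nonneg _) hs0
  calc Real.sqrt (∑ j, ‖h j‖ ^ 2) ≤ Real.sqrt (σ s ^ 2) := Real.sqrt_le_sqrt key.1
    _ = σ s := by rw [Real.sqrt_sq key.2]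
end

section
/- Let ℓ ≥ 1 be an integer and let a, b be real numbers with 0 ≤ b ≤ a and a ≤ max{ℓ·√(2b), √ℓ·b}. Then √(a² − b²) ≤ σ_RR(a), where σ_RR(s) = s·√(1 − s²/(4ℓ⁴)) for 0 ≤ s < 2√(ℓ³) and σ_RR(s) = √((ℓ−1)/ℓ)·s for s ≥ 2√(ℓ³). -/
set_option maxHeartbeats 1600000 in
/-- **Modified RR one-step decrease.**
If `0 ≤ b ≤ a` and `a ≤ max{ℓ·√(2b), √ℓ·b}`, then `√(a² - b²) ≤ σ_RR(a)`, where
`σ_RR s = s·√(1 - s²/(4ℓ⁴))` for `0 ≤ s < 2√(ℓ³)` and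
`σ_RR s = √((ℓ-1)/ℓ)·s` for `s ≥ 2√(ℓ³)`. -/
theorem modified_RR_lyapunov_decrease
    (ℓ : ℕ) (hℓ : 1 ≤ ℓ) (σ : ℝ → ℝ)
    (hσ1 : ∀ s : ℝ, 0 ≤ s → s < 2 * Real.sqrt ((ℓ : ℝ) ^ 3) →
      σ s = s * Real.sqrt (1 - s ^ 2 / (4 * (ℓ : ℝ) ^ 4)))
    (hσ2 : ∀ s : ℝ, 2 * Real.sqrt ((ℓ : ℝ) ^ 3) ≤ s →
      σ s = Real.sqrt (((ℓ : ℝ) - 1) / (ℓ : ℝ)) * s)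
    (a b : ℝ) (hb : 0 ≤ b) (hba : b ≤ a)
    (ha : a ≤ max ((ℓ : ℝ) * Real.sqrt (2 * b)) (Real.sqrt ℓ * b)) :
    Real.sqrt (a ^ 2 - b ^ 2) ≤ σ a := by
  have hL : (1 : ℝ) ≤ (ℓ : ℝ) := by exact_mod_cast hℓ
  have hLpos : (0 : ℝ) < (ℓ : ℝ) := by linarith
  have ha0 : 0 ≤ a := le_trans hb hba
  set s : ℝ := Real.sqrt (ℓ : ℝ) with hs
  have hs0 : 0 ≤ s := Real.sqrt_nonneg _
  have hs2 : s ^ 2 = (ℓ : ℝ) := Real.sq_sqrt hLpos.le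
  have hs1 : 1 ≤ s := by nlinarith [hs2]
  have hcube : Real.sqrt ((ℓ : ℝ) ^ 3) = s ^ 3 := by
    rw [show ((ℓ : ℝ) ^ 3) = (s ^ 3) ^ 2 by rw [← hs2]; ring]
    exact Real.sqrt_sq (by positivity)
  have h2b : Real.sqrt (2 * b) ^ 2 = 2 * b := Real.sq_sqrt (by positivity)
  have h2b0 : 0 ≤ Real.sqrt (2 * b) := Real.sqrt_nonneg _
  rcases lt_or_ge a (2 * Real.sqrt ((ℓ : ℝ) ^ 3)) with hc | hc
  · -- small case
    rw [hσ1 a ha0 hc]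
    have hclt : a < 2 * s ^ 3 := by rwa [hcube] at hc
    have hkey : a ^ 2 ≤ 2 * (ℓ : ℝ) ^ 2 * b := by
      rcases le_max_iff.mp ha with h | h
      · nlinarith [h2b, mul_nonneg hLpos.le h2b0]
      · -- a ≤ s * b, a < 2 s³ ⇒ a² ≤ a·(s b) ≤ 2 s³ · (s b) = 2 s⁴ b = 2 ℓ² b? no, 2 s⁴ b = 2 ℓ² b needs s⁴ = ℓ². Indeed s⁴ = (s²)² = ℓ².
        have p1 : a * a ≤ a * (s * b) := by
          apply mul_le_mul_of_nonneg_left h ha0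
        have p2 : a * (s * b) ≤ (2 * s ^ 3) * (s * b) := by
          apply mul_le_mul_of_nonneg_right hclt.le (by positivity)
        have hs4 : s ^ 4 = (ℓ : ℝ) ^ 2 := by rw [← hs2]; ring
        nlinarith [p1, p2, hs4]
    have h4 : a ^ 4 ≤ 4 * (ℓ : ℝ) ^ 4 * b ^ 2 := by
      nlinarith [mul_self_le_mul_self (sq_nonneg a) hkey]
    have hrhs : a * Real.sqrt (1 - a ^ 2 / (4 * (ℓ : ℝ) ^ 4))
        = Real.sqrt (a ^ 2 - a ^ 4 / (4 * (ℓ : ℝ) ^ 4)) := by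
      rw [show a ^ 2 - a ^ 4 / (4 * (ℓ : ℝ) ^ 4)
            = a ^ 2 * (1 - a ^ 2 / (4 * (ℓ : ℝ) ^ 4)) by field_simp,
          Real.sqrt_mul (sq_nonneg a), Real.sqrt_sq ha0]
    rw [hrhs]
    apply Real.sqrt_le_sqrt
    have hdiv : a ^ 4 / (4 * (ℓ : ℝ) ^ 4) ≤ b ^ 2 := by
      rw [div_le_iff₀ (by positivity)]
      nlinarith [h4]
    linarith
  · -- large case
    rw [hσ2 a hc]
    have hc2 : 4 * (ℓ : ℝ) ^ 3 ≤ a ^ 2 := by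
      have h1 : 2 * s ^ 3 ≤ a := by rwa [hcube] at hc
      have h2 : (2 * s ^ 3) * (2 * s ^ 3) ≤ a * a :=
        mul_self_le_mul_self (by positivity) h1
      have h3 : s ^ 6 = (ℓ : ℝ) ^ 3 := by rw [← hs2]; ring
      nlinarith [h2, h3]
    have hkey : a ^ 2 ≤ (ℓ : ℝ) * b ^ 2 := by
      rcases le_max_iff.mp ha with h | h
      · -- a ≤ ℓ√(2b), so a² ≤ 2ℓ²b; with a² ≥ 4ℓ³ get b ≥ 2ℓ, hence ℓb² ≥ 2ℓ²b ≥ a²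
        have ha2 : a ^ 2 ≤ 2 * (ℓ : ℝ) ^ 2 * b := by
          nlinarith [h2b, mul_nonneg hLpos.le h2b0]
        have hb2 : 2 * (ℓ : ℝ) ≤ b := by
          nlinarith [ha2, hc2, mul_pos hLpos hLpos]
        have h5 : 0 ≤ (ℓ : ℝ) * b * (b - 2 * (ℓ : ℝ)) :=
          mul_nonneg (mul_nonneg hLpos.le hb) (by linarith)
        nlinarith [h5, ha2]
      · nlinarith [h, hs2, mul_nonneg hs0 hb]
    have hrhs : Real.sqrt (((ℓ : ℝ) - 1) / (ℓ : ℝ)) * a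
        = Real.sqrt ((((ℓ : ℝ) - 1) / (ℓ : ℝ)) * a ^ 2) := by
      rw [Real.sqrt_mul (div_nonneg (by linarith) hLpos.le), Real.sqrt_sq ha0]
    rw [hrhs]
    apply Real.sqrt_le_sqrt
    rw [div_mul_eq_mul_div, le_div_iff₀ hLpos]
    nlinarith [hkey]
end

section
/- Let γ > L > 0 and λ ∈ (0, 1). Set r := √((γ/L)² − 1) and 𝒯 := (1/(L·r)) · arctan( r(1−λ) / ( 2(λ/(λ+1))(γ/L − 1) + 1 + λ ) ). Let φ : [0, 𝒯] → ℝ be differentiable with φ(0) = 1/λ and φ'(τ) = −2Lφ(τ) − γ(φ(τ)² + 1) for all τ ∈ [0, 𝒯]. Then λ ≤ φ(τ) ≤ 1/λ for all τ ∈ [0, 𝒯]. -/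
open Real Set

private lemma riccati_aux_pos (L γ lam : ℝ) (hL : 0 < L) (hγ : L < γ)
    (hlam0 : 0 < lam) (hlam1 : lam < 1) :
    0 < 2 * (lam / (lam + 1)) * (γ / L - 1) + 1 + lam := by
  have h1 : 0 < lam / (lam + 1) := by positivity
  have hq1 : 1 < γ / L := (one_lt_div hL).mpr hγ
  nlinarith

private lemma riccati_aux_ne (L γ lam : ℝ) (hL : 0 < L) (hγ : L < γ)
    (hlam0 : 0 < lam) (hlam1 : lam < 1) :
    2 * lam * (γ - L) + (lam + 1) * L + lam * ((lam + 1) * L) ≠ 0 := by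
  have h1 : 0 < lam * (γ - L) := mul_pos hlam0 (sub_pos.mpr hγ)
  have h2 : 0 < (lam + 1) * L := mul_pos (by linarith) hL
  have h3 : 0 < lam * ((lam + 1) * L) := mul_pos hlam0 h2
  nlinarith

private lemma riccati_aux_Xval (L γ lam r : ℝ) (hL : 0 < L) (hγ : L < γ)
    (hlam0 : 0 < lam) (hlam1 : lam < 1)
    (hr2' : L ^ 2 * r ^ 2 = γ ^ 2 - L ^ 2) (hrpos : 0 < r) :
    (r * (1 - lam) / (2 * (lam / (lam + 1)) * (γ / L - 1) + 1 + lam)) *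
      (1 + ((1 / lam + L / γ) / (L * r / γ)) * ((lam + L / γ) / (L * r / γ)))
      = (1 / lam + L / γ) / (L * r / γ) - (lam + L / γ) / (L * r / γ) := by
  have hγ0 : 0 < γ := hL.trans hγ
  have hD2 := riccati_aux_ne L γ lam hL hγ hlam0 hlam1
  field_simp [hD2]
  rw [div_eq_iff (by intro h; apply hD2; linarith)]
  linear_combination (1 - lam^2) * lam * hr2'

private lemma riccati_aux_deriv (L γ r b : ℝ) (hγ0 : 0 < γ)
    (hγb : γ * b = L * r) (hb2 : γ ^ 2 * b ^ 2 = γ ^ 2 - L ^ 2) (t : ℝ) :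
    b * ((1 + t ^ 2) * -(L * r)) =
      -2 * L * (-(L / γ) + b * t) - γ * ((-(L / γ) + b * t) ^ 2 + 1) := by
  rw [← hγb]
  field_simp
  linear_combination (-1) * hb2

private lemma riccati_aux_lip (L γ mm MM : ℝ) (hL : 0 < L) (hγ0 : 0 < γ) (t : ℝ) :
    LipschitzOnWith (Real.toNNReal (2*L + 2*γ*(|mm| + |MM|)))
      (fun x : ℝ => -2*L*x - γ*(x^2+1)) (Icc mm MM) := by
  apply LipschitzOnWith.of_dist_le'
  intro x hx y hy
  rw [Real.dist_eq, Real.dist_eq]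
  have hxa : |x| ≤ |mm| + |MM| := by
    rw [abs_le]
    constructor
    · nlinarith [neg_abs_le mm, hx.1, abs_nonneg MM]
    · nlinarith [le_abs_self MM, hx.2, abs_nonneg mm]
  have hya : |y| ≤ |mm| + |MM| := by
    rw [abs_le]
    constructor
    · nlinarith [neg_abs_le mm, hy.1, abs_nonneg MM]
    · nlinarith [le_abs_self MM, hy.2, abs_nonneg mm]
  have heq : (-2*L*x - γ*(x^2+1)) - (-2*L*y - γ*(y^2+1))
      = (x - y) * (-(2*L) - γ*(x+y)) := by ring
  rw [heq, abs_mul, mul_comm (2*L + 2*γ*(|mm| + |MM|)) (|x - y|)]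
  apply mul_le_mul_of_nonneg_left _ (abs_nonneg _)
  have habs : |x + y| ≤ |x| + |y| := abs_add_le x y
  have h2 : |(-(2*L) - γ*(x+y))| ≤ 2*L + γ*(|x| + |y|) := by
    rw [abs_le]
    constructor
    · nlinarith [le_abs_self (x+y), neg_abs_le (x+y)]
    · nlinarith [le_abs_self (x+y), neg_abs_le (x+y)]
  calc |(-(2*L) - γ*(x+y))| ≤ 2*L + γ*(|x| + |y|) := h2
    _ ≤ 2*L + 2*γ*(|mm| + |MM|) := by nlinarith [abs_nonneg x, abs_nonneg y]

set_option maxHeartbeats 1000000 in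
/-- **The Riccati clock stays in `[λ, 1/λ]` on `[0, 𝒯]`, case `γ > L`.**
With `r = √((γ/L)² - 1)` and
`𝒯 = (1/(L·r))·arctan(r(1-λ) / (2(λ/(λ+1))(γ/L - 1) + 1 + λ))`,
any solution of `φ' = -2Lφ - γ(φ² + 1)` with `φ(0) = 1/λ` satisfies
`λ ≤ φ(τ) ≤ 1/λ` for all `τ ∈ [0, 𝒯]`. -/
theorem riccati_clock_bounds_gamma_gt_L
    (L γ lam : ℝ) (hL : 0 < L) (hγ : L < γ) (hlam0 : 0 < lam) (hlam1 : lam < 1)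
    (r T : ℝ)
    (hr : r = Real.sqrt ((γ / L) ^ 2 - 1))
    (hT : T = 1 / (L * r) *
      Real.arctan (r * (1 - lam) / (2 * (lam / (lam + 1)) * (γ / L - 1) + 1 + lam)))
    (φ : ℝ → ℝ) (hφ0 : φ 0 = 1 / lam)
    (hderiv : ∀ τ ∈ Set.Icc (0 : ℝ) T,
      HasDerivWithinAt φ (-2 * L * φ τ - γ * ((φ τ) ^ 2 + 1)) (Set.Icc (0 : ℝ) T) τ) :
    ∀ τ ∈ Set.Icc (0 : ℝ) T, lam ≤ φ τ ∧ φ τ ≤ 1 / lam := by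
  have hγ0 : 0 < γ := hL.trans hγ
  have hq1 : 1 < γ / L := (one_lt_div hL).mpr hγ
  have hq2 : 1 < (γ / L) ^ 2 := by nlinarith [hq1]
  have hr2 : r ^ 2 = (γ / L) ^ 2 - 1 := by
    rw [hr, Real.sq_sqrt (by linarith)]
  have hrpos : 0 < r := by
    rw [hr]; exact Real.sqrt_pos.mpr (by linarith)
  have hr2' : L ^ 2 * r ^ 2 = γ ^ 2 - L ^ 2 := by
    field_simp [hL.ne'] at hr2; linarith
  set b : ℝ := L * r / γ with hbdef
  have hbpos : 0 < b := by positivity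
  have hγb : γ * b = L * r := by rw [hbdef]; field_simp
  have hb2 : γ ^ 2 * b ^ 2 = γ ^ 2 - L ^ 2 := by
    linear_combination (γ * b + L * r) * hγb + hr2'
  set ψ0 : ℝ := (1 / lam + L / γ) / b with hψ0def
  set ψT : ℝ := (lam + L / γ) / b with hψTdef
  have hψTpos : 0 < ψT := by positivity
  have hψ0pos : 0 < ψ0 := by positivity
  set X : ℝ := r * (1 - lam) / (2 * (lam / (lam + 1)) * (γ / L - 1) + 1 + lam) with hXdef
  have hD : 0 < 2 * (lam / (lam + 1)) * (γ / L - 1) + 1 + lam :=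
    riccati_aux_pos L γ lam hL hγ hlam0 hlam1
  have hXpos : 0 < X := by
    rw [hXdef]
    apply div_pos _ hD
    have : 0 < 1 - lam := by linarith
    positivity
  have hXval : X * (1 + ψ0 * ψT) = ψ0 - ψT := by
    rw [hXdef, hψ0def, hψTdef, hbdef]
    exact riccati_aux_Xval L γ lam r hL hγ hlam0 hlam1 hr2' hrpos
  have h1ψ : 0 < 1 + ψ0 * ψT := by positivity
  have hXψT : X * ψT < 1 := by
    have hform : X * ψT = (ψ0*ψT - ψT^2)/(1+ψ0*ψT) := by
      rw [eq_div_iff h1ψ.ne']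
      linear_combination ψT * hXval
    rw [hform, div_lt_one h1ψ]
    have := sq_nonneg ψT
    linarith
  have hkey : Real.arctan X + Real.arctan ψT = Real.arctan ψ0 := by
    rw [Real.arctan_add hXψT]
    congr 1
    rw [div_eq_iff (sub_pos.mpr hXψT).ne']
    linear_combination hXval
  have harcXpos : 0 < Real.arctan X := by
    rw [← Real.arctan_zero]; exact Real.arctan_strictMono hXpos
  have harcψT : 0 < Real.arctan ψT := by
    rw [← Real.arctan_zero]; exact Real.arctan_strictMono hψTpos
  have hTpos : 0 < T := by
    rw [hT]
    have h1 : 0 < 1 / (L * r) := by positivity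
    exact mul_pos h1 harcXpos
  have hLrT : L * r * T = Real.arctan X := by
    rw [hT]
    field_simp
  set θ : ℝ → ℝ := fun τ => Real.arctan ψ0 - L * r * τ with hθdef
  have hθmem : ∀ τ ∈ Icc (0:ℝ) T, θ τ ∈ Icc (Real.arctan ψT) (Real.arctan ψ0) := by
    intro τ hτ
    obtain ⟨h0, hTt⟩ := hτ
    have h1 : L * r * τ ≤ L * r * T := by
      apply mul_le_mul_of_nonneg_left hTt (by positivity)
    have h2 : 0 ≤ L * r * τ := by positivity
    rw [hLrT] at h1
    constructor
    · simp only [hθdef]; linarith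
    · simp only [hθdef]; linarith
  have hθIoo : ∀ τ ∈ Icc (0:ℝ) T, θ τ ∈ Ioo (-(π/2)) (π/2) := by
    intro τ hτ
    obtain ⟨ha, hb'⟩ := hθmem τ hτ
    exact ⟨lt_of_lt_of_le (Real.neg_pi_div_two_lt_arctan ψT) ha,
      lt_of_le_of_lt hb' (Real.arctan_lt_pi_div_two ψ0)⟩
  set g : ℝ → ℝ := fun τ => -(L/γ) + b * Real.tan (θ τ) with hgdef
  have hbne : b ≠ 0 := hbpos.ne'
  have hbψT : b * ψT = lam + L/γ := by
    rw [hψTdef, mul_div_cancel₀ _ hbne]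
  have hbψ0 : b * ψ0 = 1/lam + L/γ := by
    rw [hψ0def, mul_div_cancel₀ _ hbne]
  have hg0 : g 0 = 1 / lam := by
    simp only [hgdef, hθdef, mul_zero, sub_zero, Real.tan_arctan]
    rw [hbψ0]; ring
  have htan_bounds : ∀ τ ∈ Icc (0:ℝ) T,
      ψT ≤ Real.tan (θ τ) ∧ Real.tan (θ τ) ≤ ψ0 := by
    intro τ hτ
    obtain ⟨ha, hb'⟩ := hθmem τ hτ
    constructor
    · have := Real.strictMonoOn_tan.monotoneOn (Real.arctan_mem_Ioo ψT) (hθIoo τ hτ) ha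
      rwa [Real.tan_arctan] at this
    · have := Real.strictMonoOn_tan.monotoneOn (hθIoo τ hτ) (Real.arctan_mem_Ioo ψ0) hb'
      rwa [Real.tan_arctan] at this
  have hgmem : ∀ τ ∈ Icc (0:ℝ) T, g τ ∈ Icc lam (1/lam) := by
    intro τ hτ
    obtain ⟨h1, h2⟩ := htan_bounds τ hτ
    constructor
    · have h3 := mul_le_mul_of_nonneg_left h1 hbpos.le
      rw [hbψT] at h3
      simp only [hgdef]; linarith
    · have h3 := mul_le_mul_of_nonneg_left h2 hbpos.le
      rw [hbψ0] at h3
      simp only [hgdef]; linarith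
  have hgD : ∀ τ ∈ Icc (0:ℝ) T,
      HasDerivAt g (-2*L*(g τ) - γ*((g τ)^2+1)) τ := by
    intro τ hτ
    have hcos : Real.cos (θ τ) ≠ 0 := (Real.cos_pos_of_mem_Ioo (hθIoo τ hτ)).ne'
    have hθ' : HasDerivAt θ (-(L*r)) τ := by
      simpa using ((hasDerivAt_id τ).const_mul (L*r)).const_sub (Real.arctan ψ0)
    have htan : HasDerivAt (fun τ => Real.tan (θ τ))
        (1 / Real.cos (θ τ)^2 * -(L*r)) τ :=
      (Real.hasDerivAt_tan hcos).comp τ hθ'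
    have hg' : HasDerivAt g (b * (1 / Real.cos (θ τ)^2 * -(L*r))) τ :=
      (htan.const_mul b).const_add (-(L/γ))
    convert hg' using 1
    have hsq : 1 / Real.cos (θ τ)^2 = 1 + Real.tan (θ τ)^2 := by
      rw [one_div, ← Real.inv_one_add_tan_sq hcos, inv_inv]
    rw [hsq]
    simp only [hgdef]
    exact (riccati_aux_deriv L γ r b hγ0 hγb hb2 (Real.tan (θ τ))).symm
  have hφcont : ContinuousOn φ (Icc 0 T) := fun t ht => (hderiv t ht).continuousWithinAt
  obtain ⟨C, hC⟩ := (isCompact_Icc).exists_bound_of_continuousOn hφcont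
  set m : ℝ := min (-C) lam with hmdef
  set M : ℝ := max C (1/lam) with hMdef
  set vv : ℝ → ℝ → ℝ := fun _ x => -2*L*x - γ*(x^2+1) with hvdef
  have hlip : ∀ t : ℝ, LipschitzOnWith (Real.toNNReal (2*L + 2*γ*(|m| + |M|)))
      (vv t) (Icc m M) := fun t => riccati_aux_lip L γ m M hL hγ0 t
  have hmM : ∀ t ∈ Ico (0:ℝ) T, φ t ∈ Icc m M := by
    intro t ht
    have h1 := hC t (Ico_subset_Icc_self ht)
    rw [Real.norm_eq_abs, abs_le] at h1
    exact ⟨le_trans (min_le_left _ _) h1.1, le_trans h1.2 (le_max_left _ _)⟩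
  have hgs : ∀ t ∈ Ico (0:ℝ) T, g t ∈ Icc m M := by
    intro t ht
    obtain ⟨h1, h2⟩ := hgmem t (Ico_subset_Icc_self ht)
    exact ⟨le_trans (min_le_right _ _) h1, le_trans h2 (le_max_right _ _)⟩
  have hf' : ∀ t ∈ Ico (0:ℝ) T, HasDerivWithinAt φ (vv t (φ t)) (Ici t) t := by
    intro t ht
    exact (hderiv t (Ico_subset_Icc_self ht)).mono_of_mem_nhdsWithin
      (Icc_mem_nhdsGE_of_mem ht)
  have hg' : ∀ t ∈ Ico (0:ℝ) T, HasDerivWithinAt g (vv t (g t)) (Ici t) t := by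
    intro t ht
    exact (hgD t (Ico_subset_Icc_self ht)).hasDerivWithinAt
  have hgcont : ContinuousOn g (Icc 0 T) :=
    fun t ht => (hgD t ht).continuousAt.continuousWithinAt
  have heqOn : EqOn φ g (Icc 0 T) :=
    ODE_solution_unique_of_mem_Icc_right (fun t _ => hlip t) hφcont hf' hmM hgcont hg' hgs
      (by rw [hφ0, hg0])
  intro τ hτ
  rw [heqOn hτ]
  exact ⟨(hgmem τ hτ).1, (hgmem τ hτ).2⟩
end

section
/- Let L > 0, γ = L, and λ ∈ (0, 1). Set 𝒯 := (1/L)·(1−λ)/(1+λ). Let φ : [0, 𝒯] → ℝ be differentiable with φ(0) = 1/λ and φ'(τ) = −2Lφ(τ) − L(φ(τ)² + 1) for all τ ∈ [0, 𝒯]. Then λ ≤ φ(τ) ≤ 1/λ for all τ ∈ [0, 𝒯]. -/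
open Set

/-- On any subinterval `[0, b] ⊆ [0, T]` where `φ ≥ lam > 0`, the function
`t ↦ (φ t + 1)⁻¹ - L * t` is constant. -/
lemma psi_const_on (L lam : ℝ) (hL : 0 < L) (hlam0 : 0 < lam) (T b : ℝ)
    (hb0 : 0 ≤ b) (hbT : b ≤ T) (φ : ℝ → ℝ)
    (hderiv : ∀ τ ∈ Set.Icc (0 : ℝ) T,
      HasDerivWithinAt φ (-2 * L * φ τ - L * ((φ τ) ^ 2 + 1)) (Set.Icc (0 : ℝ) T) τ)
    (hlow : ∀ t ∈ Set.Icc (0 : ℝ) b, lam ≤ φ t) :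
    ∀ t ∈ Set.Icc (0 : ℝ) b, (φ t + 1)⁻¹ - L * t = (φ 0 + 1)⁻¹ := by
  set ψ : ℝ → ℝ := fun t => (φ t + 1)⁻¹ - L * t with hψdef
  have hsub : Icc (0 : ℝ) b ⊆ Icc (0 : ℝ) T := Icc_subset_Icc le_rfl hbT
  have hψd : ∀ t ∈ Icc (0 : ℝ) b, HasDerivWithinAt ψ 0 (Icc (0 : ℝ) b) t := by
    intro t ht
    have hne : φ t + 1 ≠ 0 := by have := hlow t ht; intro h; nlinarith
    have h1 : HasDerivWithinAt φ (-2 * L * φ t - L * ((φ t) ^ 2 + 1)) (Icc (0 : ℝ) b) t :=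
      (hderiv t (hsub ht)).mono hsub
    have h2 := ((h1.add_const 1).inv hne).sub
      ((hasDerivWithinAt_id t (Icc (0 : ℝ) b)).const_mul L)
    convert h2 using 1
    · rfl
    · rfl
    · rfl
    field_simp
    ring
  have hcont : ContinuousOn ψ (Icc (0 : ℝ) b) :=
    fun t ht => (hψd t ht).continuousWithinAt
  have hright : ∀ t ∈ Ico (0 : ℝ) b, HasDerivWithinAt ψ 0 (Ici t) t := by
    intro t ht
    exact (hψd t ⟨ht.1, ht.2.le⟩).mono_of_mem_nhdsWithin (Icc_mem_nhdsGE_of_mem ht)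
  have hconst := constant_of_has_deriv_right_zero hcont hright
  intro t ht
  have := hconst t ht
  simpa [hψdef] using this

/-- **The Riccati clock stays in `[λ, 1/λ]` on `[0, 𝒯]`, case `γ = L`.**
With `𝒯 = (1/L)·(1-λ)/(1+λ)`, any solution of `φ' = -2Lφ - L(φ² + 1)` with
`φ(0) = 1/λ` satisfies `λ ≤ φ(τ) ≤ 1/λ` for all `τ ∈ [0, 𝒯]`. -/
theorem riccati_clock_bounds_gamma_eq_L
    (L lam : ℝ) (hL : 0 < L) (hlam0 : 0 < lam) (hlam1 : lam < 1)
    (T : ℝ) (hT : T = 1 / L * ((1 - lam) / (1 + lam)))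
    (φ : ℝ → ℝ) (hφ0 : φ 0 = 1 / lam)
    (hderiv : ∀ τ ∈ Set.Icc (0 : ℝ) T,
      HasDerivWithinAt φ (-2 * L * φ τ - L * ((φ τ) ^ 2 + 1)) (Set.Icc (0 : ℝ) T) τ) :
    ∀ τ ∈ Set.Icc (0 : ℝ) T, lam ≤ φ τ ∧ φ τ ≤ 1 / lam := by
  have hφc : ContinuousOn φ (Icc (0 : ℝ) T) :=
    fun t ht => (hderiv t ht).continuousWithinAt
  have hlam1' : lam ≤ 1 / lam := by
    rw [le_div_iff₀ hlam0]; nlinarith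
  -- Step 1: lower bound
  have hlow : ∀ τ ∈ Icc (0 : ℝ) T, lam ≤ φ τ := by
    by_contra h
    push_neg at h
    obtain ⟨τ₀, hτ₀, hφτ₀⟩ := h
    have hsub : Icc (0 : ℝ) τ₀ ⊆ Icc (0 : ℝ) T := Icc_subset_Icc le_rfl hτ₀.2
    have hcont' : ContinuousOn φ (Icc (0 : ℝ) τ₀) := hφc.mono hsub
    have hmem : lam ∈ Icc (φ τ₀) (φ 0) := ⟨hφτ₀.le, by rw [hφ0]; exact hlam1'⟩
    obtain ⟨s₀, hs₀, hφs₀⟩ := intermediate_value_Icc' hτ₀.1 hcont' hmem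
    set S : Set ℝ := Icc (0 : ℝ) τ₀ ∩ φ ⁻¹' {lam} with hSdef
    have hSne : S.Nonempty := ⟨s₀, hs₀, hφs₀⟩
    have hSclosed : IsClosed S :=
      hcont'.preimage_isClosed_of_isClosed isClosed_Icc isClosed_singleton
    have hSbdd : BddBelow S := ⟨0, fun x hx => hx.1.1⟩
    set t₁ := sInf S with ht₁def
    have ht₁S : t₁ ∈ S := hSclosed.csInf_mem hSne hSbdd
    obtain ⟨ht₁, hφt₁⟩ := ht₁S
    have hφt₁' : φ t₁ = lam := hφt₁
    -- φ ≥ lam on [0, t₁]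
    have hlow' : ∀ t ∈ Icc (0 : ℝ) t₁, lam ≤ φ t := by
      intro t ht
      by_contra hlt
      push_neg at hlt
      have httau : t ≤ τ₀ := ht.2.trans ht₁.2
      have hmem' : lam ∈ Icc (φ t) (φ 0) := ⟨hlt.le, by rw [hφ0]; exact hlam1'⟩
      obtain ⟨s, hs, hφs⟩ := intermediate_value_Icc' ht.1
        (hcont'.mono (Icc_subset_Icc le_rfl httau)) hmem'
      have hsS : s ∈ S := ⟨⟨hs.1, hs.2.trans httau⟩, hφs⟩
      have : t₁ ≤ s := csInf_le hSbdd hsS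
      have hst : s = t := le_antisymm hs.2 (by linarith [ht.2])
      rw [hst] at hφs
      linarith
    have hψ := psi_const_on L lam hL hlam0 T t₁ ht₁.1 (ht₁.2.trans hτ₀.2) φ hderiv hlow'
    have h1 := hψ t₁ ⟨ht₁.1, le_rfl⟩
    rw [hφt₁', hφ0] at h1
    have hlamne : lam ≠ 0 := hlam0.ne'
    have h1lam : (0 : ℝ) < 1 + lam := by linarith
    have ht₁T : t₁ = T := by
      rw [hT]
      field_simp at h1 ⊢
      nlinarith [h1]
    have ht₁ne : t₁ ≠ τ₀ := by
      intro h
      rw [h] at hφt₁'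
      linarith
    have : t₁ < τ₀ := lt_of_le_of_ne ht₁.2 ht₁ne
    linarith [hτ₀.2, ht₁T ▸ this]
  -- Step 2: upper bound
  intro τ hτ
  refine ⟨hlow τ hτ, ?_⟩
  have hT0 : (0 : ℝ) ≤ T := hτ.1.trans hτ.2
  have hψ := psi_const_on L lam hL hlam0 T T hT0 le_rfl φ hderiv hlow
  have h1 := hψ τ hτ
  rw [hφ0] at h1
  have hp : 0 < φ τ + 1 := by have := hlow τ hτ; linarith
  have hτ0 : 0 ≤ τ := hτ.1
  have key : (φ τ + 1) * (φ τ + 1)⁻¹ = 1 := mul_inv_cancel₀ hp.ne'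
  have hinv : lam / (1 + lam) ≤ (φ τ + 1)⁻¹ := by
    have heq : (1 / lam + 1)⁻¹ = lam / (1 + lam) := by
      field_simp
    rw [heq] at h1
    nlinarith [mul_nonneg hL.le hτ0]
  have h1lam : (0 : ℝ) < 1 + lam := by linarith
  have := mul_le_mul_of_nonneg_left hinv hp.le
  rw [key] at this
  have h2 := mul_le_mul_of_nonneg_right this h1lam.le
  rw [mul_assoc, div_mul_cancel₀ _ h1lam.ne'] at h2
  rw [le_div_iff₀ hlam0]
  nlinarith [h2]
end

section
/- Let η > 0, γ > 0, L > 0, and let v, w, H, φ : I → ℝ be differentiable real-valued functions on an interval I ⊆ ℝ with w(t) ≥ 0, H(t) ≥ 0, and φ(t) ≥ 0 for all t ∈ I. Suppose that for all t ∈ I: v'(t) ≤ −η·v(t) − η·w(t)² − H(t)² + γ²·w(t)², w'(t) ≤ L·w(t) + H(t), and φ'(t) = −2L·φ(t) − γ(φ(t)² + 1). Then the function U(t) := v(t) + γ·φ(t)·w(t)² satisfies U'(t) ≤ −η·v(t) − η·w(t)² for all t ∈ I. -/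
/-- **Flow decrease of the hybrid Lyapunov function (case `φ ≥ 0`).**
Let `v, w, H, φ` be differentiable real-valued functions on an interval `I`
with `w, H, φ ≥ 0` on `I`, satisfying
`v' ≤ -η·v - η·w² - H² + γ²·w²`, `w' ≤ L·w + H`, and the Riccati equation
`φ' = -2L·φ - γ(φ² + 1)`.  Then `U = v + γ·φ·w²` is differentiable on `I` and
`U' ≤ -η·v - η·w²` on `I`. -/
theorem hybrid_lyapunov_flow_decrease
    (η γ L : ℝ) (hη : 0 < η) (hγ : 0 < γ) (hL : 0 < L)
    (I : Set ℝ) (hI : Set.OrdConnected I)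
    (v w H φ dv dw : ℝ → ℝ)
    (hw0 : ∀ t ∈ I, 0 ≤ w t) (hH0 : ∀ t ∈ I, 0 ≤ H t) (hφ0 : ∀ t ∈ I, 0 ≤ φ t)
    (hv : ∀ t ∈ I, HasDerivWithinAt v (dv t) I t)
    (hdv : ∀ t ∈ I, dv t ≤ -η * v t - η * (w t) ^ 2 - (H t) ^ 2 + γ ^ 2 * (w t) ^ 2)
    (hw : ∀ t ∈ I, HasDerivWithinAt w (dw t) I t)
    (hdw : ∀ t ∈ I, dw t ≤ L * w t + H t)
    (hHdiff : DifferentiableOn ℝ H I)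
    (hφ : ∀ t ∈ I, HasDerivWithinAt φ (-2 * L * φ t - γ * ((φ t) ^ 2 + 1)) I t) :
    ∀ t ∈ I,
      HasDerivWithinAt (fun s => v s + γ * φ s * (w s) ^ 2)
        (dv t + γ * ((-2 * L * φ t - γ * ((φ t) ^ 2 + 1)) * (w t) ^ 2
          + φ t * (2 * w t * dw t))) I t ∧
      dv t + γ * ((-2 * L * φ t - γ * ((φ t) ^ 2 + 1)) * (w t) ^ 2
          + φ t * (2 * w t * dw t)) ≤ -η * v t - η * (w t) ^ 2 := by
  intro t ht
  constructor
  · have h1 := ((hv t ht).add (((hφ t ht).mul ((hw t ht).pow 2)).const_mul γ))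
    convert h1 using 1
    · rfl
    · rfl
    · funext s; simp only [Pi.add_apply, Pi.mul_apply, Pi.pow_apply]; ring
    · push_cast; simp only [Pi.pow_apply]; ring
  · have hwle := hdw t ht
    have hvle := hdv t ht
    have hwt := hw0 t ht
    have hHt := hH0 t ht
    have hφt := hφ0 t ht
    nlinarith [sq_nonneg (γ * φ t * w t - H t), mul_nonneg (mul_nonneg hγ.le hφt) hwt,
      mul_nonneg (mul_nonneg (mul_nonneg hγ.le hφt) hwt) hwt, sq_nonneg (w t), sq_nonneg (H t),
      mul_le_mul_of_nonneg_left hwle (mul_nonneg (mul_nonneg (by positivity : (0:ℝ) ≤ 2*γ) hφt) hwt)]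
end
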